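/- An edge-labelled graph G has an interval ordering if and only if it has an interval representation consistent with its labelling. -/

import Mathlib

/-!
Graphs here are finite, undirected, without parallel edges, and have a loop at
every vertex.  We model them as symmetric reflexive relations.
-/

structure LoopGraph (V : Type) where
  Adj : V → V → Prop
  symm : ∀ u v, Adj u v → Adj v u
  refl : ∀ u, Adj u u

namespace LoopGraph

variable {V W : Type}

/-- Closed neighbourhood `N[u]`. -/
def nbhd (G : LoopGraph V) (u : V) : Set V := {v | G.Adj u v}

/-- `u` is a universal vertex. -/
def Universal (G : LoopGraph V) (u : V) : Prop := ∀ v, G.Adj u v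

/-- `u ≠ v` are true twins if `N[u] = N[v]`. -/
def TrueTwins (G : LoopGraph V) (u v : V) : Prop := u ≠ v ∧ G.nbhd u = G.nbhd v

/-- `uv` is an inclusion edge: it is an edge and `N[u] ⊆ N[v]` or `N[v] ⊆ N[u]`. -/
def InclusionEdge (G : LoopGraph V) (u v : V) : Prop :=
  G.Adj u v ∧ (G.nbhd u ⊆ G.nbhd v ∨ G.nbhd v ⊆ G.nbhd u)

/-- `u` overlaps `v`: they are adjacent and their closed neighbourhoods are incomparable. -/
def Overlaps (G : LoopGraph V) (u v : V) : Prop :=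
  G.Adj u v ∧ ¬ G.nbhd u ⊆ G.nbhd v ∧ ¬ G.nbhd v ⊆ G.nbhd u

/-- `{u,v}` is a spanning pair. -/
def SpanningPair (G : LoopGraph V) (u v : V) : Prop :=
  (∀ x, ¬ G.Adj v x → G.nbhd x ⊆ G.nbhd u) ∧
  (∀ y, ¬ G.Adj u y → G.nbhd y ⊆ G.nbhd v)

/-- `uv` is a 2-overlap edge: an overlap edge forming a spanning pair. -/
def TwoOverlapEdge (G : LoopGraph V) (u v : V) : Prop :=
  G.Overlaps u v ∧ G.SpanningPair u v

/-- `uv` is a 1-overlap edge: an overlap edge not forming a spanning pair. -/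
def OneOverlapEdge (G : LoopGraph V) (u v : V) : Prop :=
  G.Overlaps u v ∧ ¬ G.SpanningPair u v

/-- `{u,v}` is a circular pair: a non-adjacent spanning pair. -/
def CircularPair (G : LoopGraph V) (u v : V) : Prop :=
  G.SpanningPair u v ∧ ¬ G.Adj u v

/-- Every vertex belongs to some circular pair. -/
def CircularlyPaired (G : LoopGraph V) : Prop := ∀ u, ∃ v, G.CircularPair u v

/-- A walk with `k` edges: vertices `P 0, …, P k` with consecutive vertices adjacent. -/
def IsWalk (G : LoopGraph V) (k : ℕ) (P : ℕ → V) : Prop :=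
  ∀ i < k, G.Adj (P i) (P (i + 1))

/-- Vertex `z` avoids the edge `ab`: every neighbour of `z` among `a, b` overlaps `z`,
and if `z` overlaps both `a` and `b` then `a, b` do not overlap each other. -/
def AvoidsEdge (G : LoopGraph V) (z a b : V) : Prop :=
  (G.Adj z a → G.Overlaps z a) ∧ (G.Adj z b → G.Overlaps z b) ∧
  (G.Overlaps z a → G.Overlaps z b → ¬ G.Overlaps a b)

/-- Vertex `z` and the walk `P` (with `k` edges) avoid each other. -/
def AvoidsWalk (G : LoopGraph V) (z : V) (k : ℕ) (P : ℕ → V) : Prop :=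
  (∀ i ≤ k, G.Adj z (P i) → G.Overlaps z (P i)) ∧
  (∀ i < k, G.Overlaps z (P i) → G.Overlaps z (P (i + 1)) →
    ¬ G.Overlaps (P i) (P (i + 1)))

/-- The walks `P` and `Q` (both with `k` edges) avoid each other. -/
def WalksAvoid (G : LoopGraph V) (k : ℕ) (P Q : ℕ → V) : Prop :=
  ∀ i < k, G.AvoidsEdge (P i) (Q i) (Q (i + 1)) ∧ G.AvoidsEdge (Q (i + 1)) (P i) (P (i + 1))

/-- `{x,y}` is a `z`-invertible pair, i.e. an invertible pair anchored at `z`. -/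
def ZInvertiblePair (G : LoopGraph V) (z x y : V) : Prop :=
  x ≠ y ∧ x ≠ z ∧ y ≠ z ∧
  ∃ k, ∃ P Q : ℕ → V, G.IsWalk k P ∧ G.IsWalk k Q ∧
    P 0 = x ∧ P k = y ∧ Q 0 = y ∧ Q k = x ∧
    G.WalksAvoid k P Q ∧ G.AvoidsWalk z k P ∧ G.AvoidsWalk z k Q

/-- `G` contains an anchored invertible pair. -/
def HasAnchoredInvertiblePair (G : LoopGraph V) : Prop :=
  ∃ z x y, G.ZInvertiblePair z x y

end LoopGraph

/-!
Circular arcs: the circle is modelled as the half-open interval `[0,1)`;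
an arc is described by its left and right endpoints (clockwise = increasing),
wrapping around if necessary.
-/

/-- Membership of the point `t` in the clockwise arc from `l` to `r`. -/
def arcMem (l r t : ℝ) : Prop :=
  (l ≤ r ∧ l ≤ t ∧ t ≤ r) ∨ (r < l ∧ (l ≤ t ∨ t ≤ r))

/-- The arc `[l₁,r₁]` is contained in the arc `[l₂,r₂]`. -/
def arcSubset (l₁ r₁ l₂ r₂ : ℝ) : Prop :=
  ∀ t ∈ Set.Ico (0 : ℝ) 1, arcMem l₁ r₁ t → arcMem l₂ r₂ t

/-- The arc `[lu,ru]` properly contains the arc `[lv,rv]`. -/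
def arcProperContains (lu ru lv rv : ℝ) : Prop :=
  arcSubset lv rv lu ru ∧ ¬ arcSubset lu ru lv rv

/-- The arcs `[lu,ru]` and `[lv,rv]` together cover the whole circle. -/
def arcsCover (lu ru lv rv : ℝ) : Prop :=
  ∀ t ∈ Set.Ico (0 : ℝ) 1, arcMem lu ru t ∨ arcMem lv rv t

/-- `b` lies strictly between `a` and `c` in the clockwise cyclic order on `[0,1)`. -/
def cycBtw (a b c : ℝ) : Prop :=
  (a < b ∧ b < c) ∨ (b < c ∧ c < a) ∨ (c < a ∧ a < b)

/-- The four points `a, b, c, d` of `[0,1)` occur in this clockwise cyclic order. -/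
def cyc4 (a b c d : ℝ) : Prop := cycBtw a b c ∧ cycBtw a c d

namespace LoopGraph

variable {V W : Type}

/-- `(l, r)` is a circular-arc representation of `G`: all endpoints are distinct and
two vertices are adjacent iff their arcs intersect. -/
def IsCARep (G : LoopGraph V) (l r : V → ℝ) : Prop :=
  (∀ v, l v ∈ Set.Ico (0 : ℝ) 1) ∧ (∀ v, r v ∈ Set.Ico (0 : ℝ) 1) ∧
  Function.Injective (Sum.elim l r) ∧
  ∀ u v, (G.Adj u v ↔ ∃ t ∈ Set.Ico (0 : ℝ) 1,
    arcMem (l u) (r u) t ∧ arcMem (l v) (r v) t)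

/-- `G` is a circular-arc graph. -/
def IsCircularArc (G : LoopGraph V) : Prop := ∃ l r : V → ℝ, G.IsCARep l r

/-- A normalized circular-arc representation of `G`. -/
def IsNormalizedRep (G : LoopGraph V) (l r : V → ℝ) : Prop :=
  G.IsCARep l r ∧
  ∀ u v, G.Adj u v → u ≠ v →
    (arcProperContains (l u) (r u) (l v) (r v) ↔ G.nbhd v ⊆ G.nbhd u) ∧
    (arcsCover (l u) (r u) (l v) (r v) ↔ G.TwoOverlapEdge u v)

/-- A circular-arc representation of the induced subgraph `G[X]` which is
normalized with respect to `G`. -/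
def IsNormalizedRepOn (G : LoopGraph V) (X : Set V) (l r : V → ℝ) : Prop :=
  (∀ v ∈ X, l v ∈ Set.Ico (0 : ℝ) 1) ∧ (∀ v ∈ X, r v ∈ Set.Ico (0 : ℝ) 1) ∧
  Set.InjOn l X ∧ Set.InjOn r X ∧ (∀ u ∈ X, ∀ v ∈ X, l u ≠ r v) ∧
  (∀ u ∈ X, ∀ v ∈ X,
    (G.Adj u v ↔ ∃ t ∈ Set.Ico (0 : ℝ) 1,
      arcMem (l u) (r u) t ∧ arcMem (l v) (r v) t)) ∧
  (∀ u ∈ X, ∀ v ∈ X, G.Adj u v → u ≠ v →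
    (arcProperContains (l u) (r u) (l v) (r v) ↔ G.nbhd v ⊆ G.nbhd u) ∧
    (arcsCover (l u) (r u) (l v) (r v) ↔ G.TwoOverlapEdge u v))

/-! Circular completions. -/

/-- `f` exhibits `G` as an induced subgraph of `H`. -/
def InducedEmb (G : LoopGraph V) (H : LoopGraph W) (f : V → W) : Prop :=
  Function.Injective f ∧ ∀ u v, (G.Adj u v ↔ H.Adj (f u) (f v))

/-- Every edge of `G` has the same type (inclusion / 1-overlap / 2-overlap)
in `G` and in `H`. -/
def SameEdgeTypes (G : LoopGraph V) (H : LoopGraph W) (f : V → W) : Prop :=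
  ∀ u v, G.Adj u v →
    ((G.InclusionEdge u v ↔ H.InclusionEdge (f u) (f v)) ∧
     (G.OneOverlapEdge u v ↔ H.OneOverlapEdge (f u) (f v)) ∧
     (G.TwoOverlapEdge u v ↔ H.TwoOverlapEdge (f u) (f v)))

/-- `H` (with embedding `f`) is a circular completion of `G`: a circularly-paired
graph with the fewest possible vertices containing `G` as an induced subgraph with
all edge types preserved. -/
def IsCircularCompletion (G : LoopGraph V) (H : LoopGraph W) (f : V → W) : Prop :=
  Finite W ∧ G.InducedEmb H f ∧ G.SameEdgeTypes H f ∧ H.CircularlyPaired ∧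
  ∀ (W' : Type) (H' : LoopGraph W') (f' : V → W'), Finite W' →
    G.InducedEmb H' f' → G.SameEdgeTypes H' f' → H'.CircularlyPaired →
    Nat.card W ≤ Nat.card W'

/-! The anchored Δ-knotting graph. -/

/-- `A(z)`: vertices nonadjacent to `z` or overlapping `z`. -/
def Aset (G : LoopGraph V) (z : V) : Set V := {u | ¬ G.Adj z u ∨ G.Overlaps z u}

/-- `x` and `y` are `uz`-connected. -/
def UZConnected (G : LoopGraph V) (u z x y : V) : Prop :=
  ¬ G.InclusionEdge x u ∧ ¬ G.InclusionEdge y u ∧ ¬ G.InclusionEdge x z ∧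
  ¬ G.InclusionEdge y z ∧ ¬ G.InclusionEdge u z ∧
  ∃ k, ∃ P : ℕ → V, G.IsWalk k P ∧ P 0 = x ∧ P k = y ∧
    G.AvoidsWalk u k P ∧ G.AvoidsWalk z k P

/-- `X` is a `uz`-component: a maximal set of pairwise `uz`-connected vertices. -/
def IsUZComponent (G : LoopGraph V) (u z : V) (X : Set V) : Prop :=
  X.Nonempty ∧ (∀ x ∈ X, ∀ y ∈ X, G.UZConnected u z x y) ∧
  ∀ Y : Set V, X ⊆ Y → (∀ x ∈ Y, ∀ y ∈ Y, G.UZConnected u z x y) → Y = X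

/-- Vertices of the `z`-anchored Δ-knotting graph: copies `(u, X)` of `u ∈ A(z)`,
one for each `uz`-component `X`. -/
def KnotVertex (G : LoopGraph V) (z : V) (p : V × Set V) : Prop :=
  p.1 ∈ G.Aset z ∧ G.IsUZComponent p.1 z p.2

/-- Edges of the `z`-anchored Δ-knotting graph: for each edge `uv` of `G` with
`u, v ∈ A(z)`, an edge between the copy of `u` for `X` and the copy of `v` for `Y`
whenever `v ∈ X` and `u ∈ Y`. -/
def KnotAdj (G : LoopGraph V) (z : V) (p q : V × Set V) : Prop :=
  G.Adj p.1 q.1 ∧ p.1 ∈ G.Aset z ∧ q.1 ∈ G.Aset z ∧ q.1 ∈ p.2 ∧ p.1 ∈ q.2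

/-- The `z`-anchored Δ-knotting graph of `G` is bipartite (it is 2-colourable). -/
def KnotBipartite (G : LoopGraph V) (z : V) : Prop :=
  ∃ c : V × Set V → Bool, ∀ p q, G.KnotVertex z p → G.KnotVertex z q →
    G.KnotAdj z p q → c p ≠ c q

/-! Non-inverting sets. -/

/-- `X` is a non-inverting set of `G`. -/
def NonInvertingSet (G : LoopGraph V) (X : Set V) : Prop :=
  (∀ u ∈ X, ∀ v ∈ X, ¬ G.TwoOverlapEdge u v) ∧
  ¬ ∃ x ∈ X, ∃ y ∈ X, ∃ k, 0 < k ∧ ∃ P Q : ℕ → V,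
      G.IsWalk k P ∧ G.IsWalk k Q ∧ (∀ i ≤ k, P i ∈ X) ∧ (∀ i ≤ k, Q i ∈ X) ∧
      P 0 = x ∧ P k = y ∧ Q 0 = y ∧ Q k = x ∧ G.WalksAvoid k P Q

end LoopGraph

/-!
Edge-labelled graphs: graphs (with loops) in which every edge is labelled
inclusion or overlap, loops being labelled inclusion.
-/

structure ELGraph (V : Type) where
  Adj : V → V → Prop
  symm : ∀ u v, Adj u v → Adj v u
  refl : ∀ u, Adj u u
  /-- `Ovl u v` means the edge `uv` is labelled as an overlap edge. -/
  Ovl : V → V → Prop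
  ovl_symm : ∀ u v, Ovl u v → Ovl v u
  ovl_adj : ∀ u v, Ovl u v → Adj u v
  ovl_irrefl : ∀ u, ¬ Ovl u u

namespace ELGraph

variable {V : Type}

/-- Closed neighbourhood `N[u]`. -/
def nbhd (G : ELGraph V) (u : V) : Set V := {v | G.Adj u v}

/-- `uv` is (labelled as) an inclusion edge. -/
def InclEdge (G : ELGraph V) (u v : V) : Prop := G.Adj u v ∧ ¬ G.Ovl u v

/-- A walk with `k` edges. -/
def IsWalk (G : ELGraph V) (k : ℕ) (P : ℕ → V) : Prop :=
  ∀ i < k, G.Adj (P i) (P (i + 1))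

/-- `z` avoids the edge `ab`: every neighbour of `z` among `a, b` overlaps `z`, and if
`z` overlaps both `a` and `b` then the edge `ab` is an inclusion edge. -/
def AvoidsEdge (G : ELGraph V) (z a b : V) : Prop :=
  (G.Adj z a → G.Ovl z a) ∧ (G.Adj z b → G.Ovl z b) ∧
  (G.Ovl z a → G.Ovl z b → ¬ G.Ovl a b)

/-- The walks `P` and `Q` (both with `k` edges) avoid each other. -/
def WalksAvoid (G : ELGraph V) (k : ℕ) (P Q : ℕ → V) : Prop :=
  ∀ i < k, G.AvoidsEdge (P i) (Q i) (Q (i + 1)) ∧ G.AvoidsEdge (Q (i + 1)) (P i) (P (i + 1))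

/-- The ordered pair `p` is related to the ordered pair `q`: there exist a walk from
`p.1` to `q.1` and a walk from `p.2` to `q.2`, of the same (positive) length, that
avoid each other. -/
def Related (G : ELGraph V) (p q : V × V) : Prop :=
  ∃ k, 0 < k ∧ ∃ P Q : ℕ → V, G.IsWalk k P ∧ G.IsWalk k Q ∧
    P 0 = p.1 ∧ Q 0 = p.2 ∧ P k = q.1 ∧ Q k = q.2 ∧ G.WalksAvoid k P Q

/-- A Δ-implication class: a maximal set of pairwise related ordered pairs. -/
def IsDeltaClass (G : ELGraph V) (A : Set (V × V)) : Prop :=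
  A.Nonempty ∧ (∀ p ∈ A, ∀ q ∈ A, G.Related p q) ∧
  ∀ B : Set (V × V), A ⊆ B → (∀ p ∈ B, ∀ q ∈ B, G.Related p q) → B = A

/-- `A⁻¹ = {(u,v) : (v,u) ∈ A}`. -/
def inv (A : Set (V × V)) : Set (V × V) := {p | p.swap ∈ A}

/-- `span A`: the set of vertices incident to pairs of `A`. -/
def span (A : Set (V × V)) : Set V := {v | ∃ p ∈ A, v = p.1 ∨ v = p.2}

/-- `S` induces a clique. -/
def IsClique (G : ELGraph V) (S : Set V) : Prop := ∀ a ∈ S, ∀ b ∈ S, G.Adj a b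

/-- A Δ-module. -/
def IsDeltaModule (G : ELGraph V) (S : Set V) : Prop :=
  S.Nonempty ∧
  (∀ x, x ∉ S →
    ((∀ s ∈ S, ¬ G.Adj x s) ∨ (∀ s ∈ S, G.InclEdge x s) ∨ (∀ s ∈ S, G.Ovl x s))) ∧
  (¬ G.IsClique S → ∀ x, x ∉ S → ∀ s ∈ S, ¬ G.Ovl x s)

/-- A trivial Δ-module: the whole vertex set or a single vertex. -/
def TrivialModule (S : Set V) : Prop := S = Set.univ ∨ ∃ a : V, S = {a}

/-- `{a,b}` is a Δ-invertible pair: `(a,b)` is related to `(b,a)`. -/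
def DeltaInvertiblePair (G : ELGraph V) (a b : V) : Prop := G.Related (a, b) (b, a)

/-- An interval ordering of an edge-labelled graph. -/
def IsIntervalOrdering (G : ELGraph V) (lt : V → V → Prop) : Prop :=
  IsStrictTotalOrder V lt ∧
  ¬ ∃ a b c, lt a b ∧ lt b c ∧
    ((¬ G.Adj a b ∧ G.Adj a c) ∨
     (G.InclEdge a b ∧ ¬ G.Adj a c ∧ G.Adj b c) ∨
     (G.Ovl a b ∧ G.Adj a c ∧ ¬ G.Adj b c) ∨
     (G.Ovl a b ∧ G.Ovl b c ∧ G.InclEdge a c) ∨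
     (G.InclEdge a b ∧ G.InclEdge b c ∧ G.Ovl a c))

/-- An interval representation of `G` consistent with its labelling. -/
def IsConsistentIntervalRep (G : ELGraph V) (l r : V → ℝ) : Prop :=
  (∀ v, l v ≤ r v) ∧
  (∀ u v, (G.Adj u v ↔ (Set.Icc (l u) (r u) ∩ Set.Icc (l v) (r v)).Nonempty)) ∧
  (∀ u v, (G.Ovl u v ↔
    ((Set.Icc (l u) (r u) ∩ Set.Icc (l v) (r v)).Nonempty ∧
     ¬ Set.Icc (l u) (r u) ⊆ Set.Icc (l v) (r v) ∧
     ¬ Set.Icc (l v) (r v) ⊆ Set.Icc (l u) (r u))))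

/-- A consistently edge-labelled graph: there is a transitive orientation `D` of its
inclusion edges (between distinct vertices) such that `D u v → N[v] ⊆ N[u]`. -/
def ConsistentlyLabelled (G : ELGraph V) : Prop :=
  ∃ D : V → V → Prop,
    (∀ u v, D u v → u ≠ v ∧ G.InclEdge u v) ∧
    (∀ u v, u ≠ v → G.InclEdge u v → (D u v ↔ ¬ D v u)) ∧
    (∀ u v w, D u v → D v w → D u w) ∧
    (∀ u v, D u v → G.nbhd v ⊆ G.nbhd u)

end ELGraph

lemma icc_inter_nonempty {a b c d : ℝ} (hab : a ≤ b) (hcd : c ≤ d) :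
    (Set.Icc a b ∩ Set.Icc c d).Nonempty ↔ a ≤ d ∧ c ≤ b := by
  rw [Set.Icc_inter_Icc, Set.nonempty_Icc, max_le_iff, le_min_iff, le_min_iff]
  constructor
  · rintro ⟨⟨h1, h2⟩, h3, h4⟩; exact ⟨h2, h3⟩
  · rintro ⟨h1, h2⟩; exact ⟨⟨hab, h1⟩, h2, hcd⟩

lemma rep_to_ordering {V : Type} [Fintype V] (G : ELGraph V) (l r : V → ℝ)
    (h : G.IsConsistentIntervalRep l r) : ∃ lt, G.IsIntervalOrdering lt := by
  classical
  obtain ⟨hlr, hadj, hovl⟩ := h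
  have adj_iff : ∀ u v, G.Adj u v ↔ (l u ≤ r v ∧ l v ≤ r u) := fun u v => by
    rw [hadj u v, icc_inter_nonempty (hlr u) (hlr v)]
  have ovl_iff : ∀ u v, G.Ovl u v ↔
      ((l u ≤ r v ∧ l v ≤ r u) ∧ (l u < l v ∨ r v < r u) ∧ (l v < l u ∨ r u < r v)) := by
    intro u v
    rw [hovl u v, icc_inter_nonempty (hlr u) (hlr v),
      Set.Icc_subset_Icc_iff (hlr u), Set.Icc_subset_Icc_iff (hlr v)]
    simp only [not_and_or, not_le]
  let e := Fintype.equivFin V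
  set lt : V → V → Prop := fun a b => l a < l b ∨ (l a = l b ∧ r b < r a) ∨
    (l a = l b ∧ r a = r b ∧ (e a : ℕ) < e b) with hlt
  have lt_l : ∀ {a b}, lt a b → l a ≤ l b ∧ (l a = l b → r b ≤ r a) := by
    intro a b hab
    rcases hab with h1 | ⟨h1, h2⟩ | ⟨h1, h2, h3⟩
    · exact ⟨le_of_lt h1, fun he => absurd he (ne_of_lt h1)⟩
    · exact ⟨le_of_eq h1, fun _ => le_of_lt h2⟩
    · exact ⟨le_of_eq h1, fun _ => le_of_eq h2.symm⟩
  have incl_r : ∀ a b, lt a b → G.InclEdge a b → r b ≤ r a := by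
    intro a b hab ⟨hadj', hno⟩
    obtain ⟨hl, hr⟩ := lt_l hab
    rw [ovl_iff] at hno
    rw [adj_iff] at hadj'
    by_contra hc
    push_neg at hc
    rcases lt_or_eq_of_le hl with h | h
    · exact hno ⟨hadj', Or.inl h, Or.inr hc⟩
    · exact absurd (hr h) (not_le.mpr hc)
  have ovl_lr : ∀ a b, lt a b → G.Ovl a b → l a < l b ∧ r a < r b := by
    intro a b hab ho
    obtain ⟨hl, hr⟩ := lt_l hab
    rw [ovl_iff] at ho
    obtain ⟨_, h1, h2⟩ := ho
    have hrab : r a < r b := by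
      rcases h2 with h2 | h2
      · exact absurd h2 (not_lt.mpr hl)
      · exact h2
    refine ⟨?_, hrab⟩
    rcases lt_or_eq_of_le hl with h | h
    · exact h
    · exact absurd (hr h) (not_le.mpr hrab)
  refine ⟨lt, ⟨?_, ?_⟩⟩
  · refine { trichotomous := ?_, irrefl := ?_, trans := ?_ }
    · intro a b hnab hnba
      rcases lt_trichotomy (l a) (l b) with h | h | h
      · exact (hnab (Or.inl h)).elim
      · rcases lt_trichotomy (r a) (r b) with h2 | h2 | h2
        · exact (hnba (Or.inr (Or.inl ⟨h.symm, h2⟩))).elim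
        · rcases lt_trichotomy ((e a : ℕ)) ((e b : ℕ)) with h3 | h3 | h3
          · exact (hnab (Or.inr (Or.inr ⟨h, h2, h3⟩))).elim
          · exact e.injective (Fin.val_injective h3)
          · exact (hnba (Or.inr (Or.inr ⟨h.symm, h2.symm, h3⟩))).elim
        · exact (hnab (Or.inr (Or.inl ⟨h, h2⟩))).elim
      · exact (hnba (Or.inl h)).elim
    · intro a hab
      rcases hab with h1 | ⟨h1, h2⟩ | ⟨h1, h2, h3⟩
      · exact lt_irrefl _ h1
      · exact lt_irrefl _ h2
      · exact lt_irrefl _ h3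
    · intro a b c hab hbc
      rcases hab with h1 | ⟨h1, h2⟩ | ⟨h1, h2, h3⟩ <;>
        rcases hbc with g1 | ⟨g1, g2⟩ | ⟨g1, g2, g3⟩ <;>
        first
          | exact Or.inl (by linarith)
          | exact Or.inr (Or.inl ⟨by linarith, by linarith⟩)
          | exact Or.inr (Or.inr ⟨by linarith, by linarith, by omega⟩)
  · rintro ⟨a, b, c, hab, hbc, hpat⟩
    have lab := lt_l hab
    have lbc := lt_l hbc
    have lab1 := lab.1
    have lbc1 := lbc.1
    rcases hpat with ⟨hnab, hac⟩ | ⟨hi, hnac, hbc'⟩ | ⟨ho, hac, hnbc⟩ |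
      ⟨ho1, ho2, hi⟩ | ⟨hi1, hi2, ho⟩
    · rw [adj_iff] at hnab hac
      have hb := hlr b
      exact hnab ⟨by linarith [hac.1], by linarith [hac.2]⟩
    · have hr := incl_r a b hab hi
      rw [adj_iff] at hnac hbc'
      have hc := hlr c
      exact hnac ⟨by linarith [hbc'.1], by linarith [hbc'.2]⟩
    · have hr := ovl_lr a b hab ho
      rw [adj_iff] at hac hnbc
      have hc := hlr c
      exact hnbc ⟨by linarith [hac.1], by linarith [hac.2]⟩
    · have h1 := ovl_lr a b hab ho1
      have h2 := ovl_lr b c hbc ho2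
      obtain ⟨hadj', hno⟩ := hi
      rw [adj_iff] at hadj'
      rw [ovl_iff] at hno
      exact hno ⟨hadj', Or.inl (by linarith), Or.inr (by linarith)⟩
    · have h1 := incl_r a b hab hi1
      have h2 := incl_r b c hbc hi2
      rw [ovl_iff] at ho
      obtain ⟨_, _, h3⟩ := ho
      rcases h3 with h3 | h3
      · linarith
      · linarith

lemma ordering_to_rep {V : Type} [Fintype V] (G : ELGraph V) (lt : V → V → Prop)
    (h : G.IsIntervalOrdering lt) : ∃ l r, G.IsConsistentIntervalRep l r := by
  classical
  obtain ⟨hsto, hforb⟩ := h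
  haveI := hsto
  letI : LinearOrder V := linearOrderOfSTO lt
  -- the strict order `<` of this linear order is definitionally `lt`
  have rule1 : ∀ a b c : V, a < b → b < c → G.Adj a c → G.Adj a b := by
    intro a b c h1 h2 h3
    by_contra hn
    exact hforb ⟨a, b, c, h1, h2, Or.inl ⟨hn, h3⟩⟩
  have rule2 : ∀ a b c : V, a < b → b < c → G.InclEdge a b → G.Adj b c → G.Adj a c := by
    intro a b c h1 h2 h3 h4
    by_contra hn
    exact hforb ⟨a, b, c, h1, h2, Or.inr (Or.inl ⟨h3, hn, h4⟩)⟩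
  have rule3 : ∀ a b c : V, a < b → b < c → G.Ovl a b → G.Adj a c → G.Adj b c := by
    intro a b c h1 h2 h3 h4
    by_contra hn
    exact hforb ⟨a, b, c, h1, h2, Or.inr (Or.inr (Or.inl ⟨h3, h4, hn⟩))⟩
  have rule4 : ∀ a b c : V, a < b → b < c → G.Ovl a b → G.Ovl b c → G.Adj a c → G.Ovl a c := by
    intro a b c h1 h2 h3 h4 h5
    by_contra hn
    exact hforb ⟨a, b, c, h1, h2, Or.inr (Or.inr (Or.inr (Or.inl ⟨h3, h4, h5, hn⟩)))⟩
  have rule5 : ∀ a b c : V, a < b → b < c → G.InclEdge a b → G.InclEdge b c → ¬ G.Ovl a c := by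
    intro a b c h1 h2 h3 h4 hn
    exact hforb ⟨a, b, c, h1, h2, Or.inr (Or.inr (Or.inr (Or.inr ⟨h3, h4, hn⟩)))⟩
  -- ranks
  let rank : V → ℕ := fun v => (Finset.univ.filter (fun u => u < v)).card
  have rank_lt : ∀ {u v : V}, u < v → rank u < rank v := by
    intro u v huv
    apply Finset.card_lt_card
    rw [Finset.ssubset_def]
    constructor
    · intro w hw
      simp only [Finset.mem_filter, Finset.mem_univ, true_and] at *
      exact hw.trans huv
    · intro hsub
      have := hsub (Finset.mem_filter.mpr ⟨Finset.mem_univ u, huv⟩)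
      simp only [Finset.mem_filter, Finset.mem_univ, true_and] at this
      exact lt_irrefl u this
  have rank_le : ∀ {u v : V}, u ≤ v → rank u ≤ rank v := by
    intro u v huv
    apply Finset.card_le_card
    intro w hw
    simp only [Finset.mem_filter, Finset.mem_univ, true_and] at *
    exact hw.trans_le huv
  have le_of_rank_le : ∀ {u v : V}, rank u ≤ rank v → u ≤ v := by
    intro u v hr
    by_contra hc
    push_neg at hc
    exact absurd hr (not_le.mpr (rank_lt hc))
  -- right-end ranks
  let Rv : V → ℕ := fun u => (Finset.univ.filter (fun w => G.Adj u w)).sup rank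
  have hRv_ge : ∀ u v, G.Adj u v → rank v ≤ Rv u := fun u v h =>
    Finset.le_sup (Finset.mem_filter.mpr ⟨Finset.mem_univ v, h⟩)
  have hRv_attain : ∀ u, ∃ w, G.Adj u w ∧ Rv u = rank w := by
    intro u
    obtain ⟨w, hw, hw2⟩ := Finset.exists_mem_eq_sup
      (Finset.univ.filter (fun w => G.Adj u w))
      ⟨u, Finset.mem_filter.mpr ⟨Finset.mem_univ u, G.refl u⟩⟩ rank
    exact ⟨w, (Finset.mem_filter.mp hw).2, hw2⟩
  have key1 : ∀ u v : V, u ≤ v → (G.Adj u v ↔ rank v ≤ Rv u) := by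
    intro u v huv
    refine ⟨hRv_ge u v, ?_⟩
    intro hle
    obtain ⟨w, hw, hweq⟩ := hRv_attain u
    have hvw : v ≤ w := le_of_rank_le (hweq ▸ hle)
    rcases eq_or_lt_of_le huv with rfl | huv'
    · exact G.refl u
    rcases eq_or_lt_of_le hvw with rfl | hvw'
    · exact hw
    · exact rule1 u v w huv' hvw' hw
  have key2a : ∀ u v : V, u < v → G.Ovl u v → Rv u ≤ Rv v := by
    intro u v huv ho
    obtain ⟨w, hw, hweq⟩ := hRv_attain u
    rw [hweq]
    rcases le_or_gt w v with hwv | hvw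
    · exact (rank_le hwv).trans (hRv_ge v v (G.refl v))
    · exact hRv_ge v w (rule3 u v w huv hvw ho hw)
  have key2b : ∀ u v : V, u < v → G.Adj u v → ¬ G.Ovl u v → Rv v ≤ Rv u := by
    intro u v huv hadj hno
    obtain ⟨w, hw, hweq⟩ := hRv_attain v
    rw [hweq]
    rcases le_or_gt w v with hwv | hvw
    · exact (rank_le hwv).trans (hRv_ge u v hadj)
    · exact hRv_ge u w (rule2 u v w huv hvw ⟨hadj, hno⟩ hw)
  have class_adj : ∀ u v : V, u < v → Rv u = Rv v → G.Adj u v := by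
    intro u v huv he
    refine (key1 u v huv.le).mpr ?_
    rw [he]
    exact hRv_ge v v (G.refl v)
  -- tie-breaking order within an Rv-class
  let prec : V → V → Prop := fun u v => (u < v ∧ G.Ovl u v) ∨ (v < u ∧ ¬ G.Ovl u v)
  have prec_irrefl : ∀ u, ¬ prec u u := by
    rintro u (⟨h, _⟩ | ⟨h, _⟩) <;> exact lt_irrefl u h
  have ruleO : ∀ a b c : V, a < b → b < c → Rv a = Rv b → Rv b = Rv c →
      G.Ovl a b → G.Ovl b c → G.Ovl a c := fun a b c h1 h2 e1 e2 o1 o2 =>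
    rule4 a b c h1 h2 o1 o2 (class_adj a c (h1.trans h2) (e1.trans e2))
  have ruleI : ∀ a b c : V, a < b → b < c → Rv a = Rv b → Rv b = Rv c →
      ¬ G.Ovl a b → ¬ G.Ovl b c → ¬ G.Ovl a c := fun a b c h1 h2 e1 e2 n1 n2 =>
    rule5 a b c h1 h2 ⟨class_adj a b h1 e1, n1⟩ ⟨class_adj b c h2 e2, n2⟩
  have prec_trans : ∀ u v w : V, Rv u = Rv v → Rv v = Rv w →
      prec u v → prec v w → prec u w := by
    intro u v w e1 e2 h1 h2
    have e3 : Rv u = Rv w := e1.trans e2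
    rcases h1 with ⟨huv, o1⟩ | ⟨hvu, o1⟩ <;> rcases h2 with ⟨hvw, o2⟩ | ⟨hwv, o2⟩
    · exact Or.inl ⟨huv.trans hvw, ruleO u v w huv hvw e1 e2 o1 o2⟩
    · -- u < v, O uv ; w < v, ¬O vw
      rcases lt_trichotomy u w with h | rfl | h
      · refine Or.inl ⟨h, ?_⟩
        by_contra hno
        exact o2 (G.ovl_symm w v (by
          by_contra hno2
          exact (ruleI u w v h hwv e3 (e3.symm.trans e1) hno hno2) o1))
      · exact absurd (G.ovl_symm u v o1) o2
      · refine Or.inr ⟨h, ?_⟩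
        intro houw
        exact o2 (G.ovl_symm w v
          (ruleO w u v h huv e3.symm e1 (G.ovl_symm u w houw) o1))
    · -- v < u, ¬O uv ; v < w, O vw
      rcases lt_trichotomy u w with h | rfl | h
      · refine Or.inl ⟨h, ?_⟩
        by_contra hno
        exact (ruleI v u w hvu h e1.symm e3 (fun x => o1 (G.ovl_symm v u x)) hno) o2
      · exact (o1 (G.ovl_symm v u o2)).elim
      · refine Or.inr ⟨h, ?_⟩
        intro houw
        exact o1 (G.ovl_symm v u
          (ruleO v w u hvw h e2 e3.symm o2 (G.ovl_symm u w houw)))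
    · -- v < u, ¬O uv ; w < v, ¬O vw
      refine Or.inr ⟨hwv.trans hvu, ?_⟩
      intro houw
      exact (ruleI w v u hwv hvu e2.symm e1.symm
        (fun x => o2 (G.ovl_symm w v x)) (fun x => o1 (G.ovl_symm v u x)))
        (G.ovl_symm u w houw)
  -- rank within class
  let tt : V → ℕ := fun v => (Finset.univ.filter (fun u => Rv u = Rv v ∧ prec u v)).card
  have tt_lt : ∀ u v : V, Rv u = Rv v → prec u v → tt u < tt v := by
    intro u v he hp
    apply Finset.card_lt_card
    rw [Finset.ssubset_def]
    constructor
    · intro w hw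
      simp only [Finset.mem_filter, Finset.mem_univ, true_and] at *
      exact ⟨hw.1.trans he, prec_trans w u v hw.1 he hw.2 hp⟩
    · intro hsub
      have := hsub (Finset.mem_filter.mpr ⟨Finset.mem_univ u, he, hp⟩)
      exact prec_irrefl u (Finset.mem_filter.mp this).2.2
  have tt_lt_card : ∀ v, tt v < Fintype.card V := by
    intro v
    rw [← Finset.card_univ]
    apply Finset.card_lt_card
    rw [Finset.ssubset_def]
    refine ⟨Finset.subset_univ _, fun hs => ?_⟩
    exact prec_irrefl v (Finset.mem_filter.mp (hs (Finset.mem_univ v))).2.2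
  set n : ℕ := Fintype.card V with hn
  let eps : V → ℝ := fun v => ((tt v : ℝ) + 1) / ((n : ℝ) + 1)
  have eps_pos : ∀ v, 0 < eps v := by
    intro v
    apply div_pos <;> positivity
  have eps_lt_one : ∀ v, eps v < 1 := by
    intro v
    rw [div_lt_one (by positivity)]
    have : (tt v : ℝ) < n := by exact_mod_cast tt_lt_card v
    linarith
  have eps_mono : ∀ u v, tt u < tt v → eps u < eps v := by
    intro u v h
    have hd : (0:ℝ) < (n:ℝ) + 1 := by positivity
    rw [div_lt_div_iff₀ hd hd]
    have : (tt u : ℝ) < tt v := by exact_mod_cast h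
    nlinarith
  -- the representation
  let l : V → ℝ := fun v => (rank v : ℝ)
  let r : V → ℝ := fun v => (Rv v : ℝ) + eps v
  have hlr : ∀ v, l v ≤ r v := by
    intro v
    have h1 : (rank v : ℝ) ≤ (Rv v : ℝ) := by exact_mod_cast hRv_ge v v (G.refl v)
    have h2 := eps_pos v
    show (rank v : ℝ) ≤ (Rv v : ℝ) + eps v
    linarith
  have l_le : ∀ {u v : V}, u ≤ v → l u ≤ l v := by
    intro u v h
    show (rank u : ℝ) ≤ (rank v : ℝ)
    exact_mod_cast rank_le h
  have l_lt : ∀ {u v : V}, u < v → l u < l v := by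
    intro u v h
    show (rank u : ℝ) < (rank v : ℝ)
    exact_mod_cast rank_lt h
  have adjr : ∀ u v : V, u ≤ v → (G.Adj u v ↔ l v ≤ r u) := by
    intro u v huv
    rw [key1 u v huv]
    constructor
    · intro h
      have h1 : (rank v : ℝ) ≤ (Rv u : ℝ) := by exact_mod_cast h
      have h2 := eps_pos u
      show (rank v : ℝ) ≤ (Rv u : ℝ) + eps u
      linarith
    · intro h
      by_contra hc
      push_neg at hc
      have h2 : (Rv u : ℝ) + 1 ≤ (rank v : ℝ) := by exact_mod_cast hc
      have h3 := eps_lt_one u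
      have h' : (rank v : ℝ) ≤ (Rv u : ℝ) + eps u := h
      linarith
  have rmono : ∀ u v : V, u < v → G.Adj u v → (G.Ovl u v ↔ r u < r v) := by
    intro u v huv hadj
    constructor
    · intro ho
      rcases lt_or_eq_of_le (key2a u v huv ho) with h | h
      · have h2 : (Rv u : ℝ) + 1 ≤ (Rv v : ℝ) := by exact_mod_cast h
        have e1 := eps_lt_one u
        have e2 := eps_pos v
        show (Rv u : ℝ) + eps u < (Rv v : ℝ) + eps v
        linarith
      · have hp : prec u v := Or.inl ⟨huv, ho⟩
        have he := eps_mono u v (tt_lt u v h hp)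
        show (Rv u : ℝ) + eps u < (Rv v : ℝ) + eps v
        rw [h]
        linarith
    · intro h
      by_contra hno
      have h' : (Rv u : ℝ) + eps u < (Rv v : ℝ) + eps v := h
      rcases lt_or_eq_of_le (key2b u v huv hadj hno) with h2 | h2
      · have h3 : (Rv v : ℝ) + 1 ≤ (Rv u : ℝ) := by exact_mod_cast h2
        have e1 := eps_lt_one v
        have e2 := eps_pos u
        linarith
      · have hp : prec v u := Or.inr ⟨huv, fun x => hno (G.ovl_symm v u x)⟩
        have he := eps_mono v u (tt_lt v u h2 hp)
        rw [h2] at h'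
        linarith
  refine ⟨l, r, hlr, ?_, ?_⟩
  · have main : ∀ u v : V, u ≤ v →
        (G.Adj u v ↔ (Set.Icc (l u) (r u) ∩ Set.Icc (l v) (r v)).Nonempty) := by
      intro u v huv
      rw [icc_inter_nonempty (hlr u) (hlr v), adjr u v huv]
      constructor
      · intro h
        exact ⟨(l_le huv).trans (hlr v), h⟩
      · exact fun h => h.2
    intro u v
    rcases le_total u v with h | h
    · exact main u v h
    · rw [show G.Adj u v ↔ G.Adj v u from ⟨G.symm u v, G.symm v u⟩, main v u h,
        Set.inter_comm]
  · have main : ∀ u v : V, u < v →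
        (G.Ovl u v ↔ ((Set.Icc (l u) (r u) ∩ Set.Icc (l v) (r v)).Nonempty ∧
          ¬ Set.Icc (l u) (r u) ⊆ Set.Icc (l v) (r v) ∧
          ¬ Set.Icc (l v) (r v) ⊆ Set.Icc (l u) (r u))) := by
      intro u v huv
      have hluv : l u < l v := l_lt huv
      by_cases hadj : G.Adj u v
      · rw [rmono u v huv hadj, icc_inter_nonempty (hlr u) (hlr v),
          Set.Icc_subset_Icc_iff (hlr u), Set.Icc_subset_Icc_iff (hlr v)]
        have hne : l u ≤ r v ∧ l v ≤ r u :=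
          ⟨hluv.le.trans (hlr v), (adjr u v huv.le).mp hadj⟩
        constructor
        · intro h
          exact ⟨hne, fun hc => absurd hc.1 (not_le.mpr hluv),
            fun hc => absurd hc.2 (not_le.mpr h)⟩
        · rintro ⟨-, h1, h2⟩
          by_contra hc
          push_neg at hc
          exact h2 ⟨hluv.le, hc⟩
      · have h1 : ¬ (l v ≤ r u) := fun x => hadj ((adjr u v huv.le).mpr x)
        constructor
        · intro x
          exact absurd (G.ovl_adj u v x) hadj
        · rintro ⟨hne, -, -⟩
          rw [icc_inter_nonempty (hlr u) (hlr v)] at hne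
          exact absurd hne.2 h1
    intro u v
    rcases lt_trichotomy u v with h | rfl | h
    · exact main u v h
    · constructor
      · intro x
        exact absurd x (G.ovl_irrefl u)
      · rintro ⟨-, h1, -⟩
        exact (h1 (subset_refl _)).elim
    · constructor
      · intro x
        obtain ⟨h1, h2, h3⟩ := (main v u h).mp (G.ovl_symm u v x)
        exact ⟨by rwa [Set.inter_comm], h3, h2⟩
      · rintro ⟨h1, h2, h3⟩
        exact G.ovl_symm v u ((main v u h).mpr ⟨by rwa [Set.inter_comm], h3, h2⟩)

/-- An edge-labelled graph has an interval ordering iff it has an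
interval representation consistent with its labelling. -/
theorem intervalOrdering_iff_consistentRep
    {V : Type} [Fintype V] (G : ELGraph V) :
    (∃ lt : V → V → Prop, G.IsIntervalOrdering lt) ↔
      (∃ l r : V → ℝ, G.IsConsistentIntervalRep l r) := by
  constructor
  · rintro ⟨lt, h⟩
    exact ordering_to_rep G lt h
  · rintro ⟨l, r, h⟩
    exact rep_to_ordering G l r h
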